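/- Fix dimensions n, p, k, a plan horizon Tc ≥ 1, and maps F̄_τ : ℝⁿ × ℝᵖ → ℝⁿ, Ḡ_τ : ℝⁿ × ℝᵖ → ℝᵏ (indexed by times τ) such that for every fixed v ∈ ℝᵖ the maps z ↦ F̄_τ(z, v) and z ↦ Ḡ_τ(z, v) are monotone. Let (z*, v*) be a reference trajectory: z*(τ+1) = F̄_τ(z*(τ), v*(τ)) and Ḡ_τ(z*(τ), v*(τ)) ≤ 0 for all τ. Suppose at time t there is a feasible plan: controls v̂(t), …, v̂(t+Tc−1) and predicted states ẑ(t) = z(t), ẑ(τ+1) = F̄_τ(ẑ(τ), v̂(τ)) with Ḡ_τ(ẑ(τ), v̂(τ)) ≤ 0 for t ≤ τ < t+Tc and the terminal constraint ẑ(t+Tc) ≤ z*(t+Tc). Let the realized next state be z(t+1) = f_t(z(t), v̂(t)) for any map f_t with f_t ≤ F̄_t pointwise, and let g_t be any map with g_t ≤ Ḡ_t pointwise. Then: (i) g_t(z(t), v̂(t)) ≤ 0; (ii) z(t+1) ≤ ẑ(t+1); and (iii) the shifted plan (v̂(t+1), …, v̂(t+Tc−1), v*(t+Tc)), with predicted states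 ž(t+1) = z(t+1) and ž(τ+1) = F̄_τ(ž(τ), ·) under the corresponding controls, is feasible at time t+1: it satisfies Ḡ_τ(ž(τ), ·) ≤ 0 at every step and the terminal constraint ž(t+1+Tc) ≤ z*(t+1+Tc). -/

import Mathlib

/-- recursive-feasibility core of paper Proposition 2: for the
monotone worst-case nominal dynamics/constraints `(F̄, Ḡ)`, a reference
trajectory `(z*, v*)`, and a feasible horizon-`Tc` plan `(v̂, ẑ)` at time `t`
with terminal constraint `ẑ(t+Tc) ≤ z*(t+Tc)`, every dominated realization
`(f, g)` satisfies the constraint at time `t`, the realized next state is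
dominated by the predicted one, and the shifted plan (reusing `v̂` and appending
`v*(t+Tc)`) is feasible at time `t+1`. -/
theorem mpc_recursive_feasibility
    (n p k Tc : ℕ) (hTc : 1 ≤ Tc)
    (Fbar : ℕ → (Fin n → ℝ) → (Fin p → ℝ) → Fin n → ℝ)
    (Gbar : ℕ → (Fin n → ℝ) → (Fin p → ℝ) → Fin k → ℝ)
    (hFmono : ∀ τ (v : Fin p → ℝ), Monotone fun z => Fbar τ z v)
    (hGmono : ∀ τ (v : Fin p → ℝ), Monotone fun z => Gbar τ z v)
    (zstar : ℕ → Fin n → ℝ) (vstar : ℕ → Fin p → ℝ)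
    (hzstarRec : ∀ τ, zstar (τ + 1) = Fbar τ (zstar τ) (vstar τ))
    (hzstarFeas : ∀ τ, Gbar τ (zstar τ) (vstar τ) ≤ 0)
    (t : ℕ) (zt : Fin n → ℝ)
    (vhat : ℕ → Fin p → ℝ) (zhat : ℕ → Fin n → ℝ)
    (hinit : zhat t = zt)
    (hpred : ∀ τ, t ≤ τ → τ < t + Tc → zhat (τ + 1) = Fbar τ (zhat τ) (vhat τ))
    (hplanFeas : ∀ τ, t ≤ τ → τ < t + Tc → Gbar τ (zhat τ) (vhat τ) ≤ 0)
    (hterm : zhat (t + Tc) ≤ zstar (t + Tc))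
    (f : (Fin n → ℝ) → (Fin p → ℝ) → Fin n → ℝ)
    (g : (Fin n → ℝ) → (Fin p → ℝ) → Fin k → ℝ)
    (hf : ∀ z v, f z v ≤ Fbar t z v)
    (hg : ∀ z v, g z v ≤ Gbar t z v) :
    -- (i) the realized constraint holds at time t
    g zt (vhat t) ≤ 0 ∧
    -- (ii) the realized next state is dominated by the predicted one
    f zt (vhat t) ≤ zhat (t + 1) ∧
    -- (iii) the shifted plan (v̂(t+1), …, v̂(t+Tc−1), v*(t+Tc)) is feasible
    -- at time t+1
    (∃ zcheck : ℕ → Fin n → ℝ,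
      zcheck (t + 1) = f zt (vhat t) ∧
      (∀ τ, t + 1 ≤ τ → τ < t + 1 + Tc →
        zcheck (τ + 1) =
            Fbar τ (zcheck τ) (if τ < t + Tc then vhat τ else vstar τ) ∧
        Gbar τ (zcheck τ) (if τ < t + Tc then vhat τ else vstar τ) ≤ 0) ∧
      zcheck (t + 1 + Tc) ≤ zstar (t + 1 + Tc)) := by
  have hz1 : zhat (t + 1) = Fbar t zt (vhat t) := by
    rw [hpred t le_rfl (by omega), hinit]
  have hii : f zt (vhat t) ≤ zhat (t + 1) := by
    rw [hz1]; exact hf zt (vhat t)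
  refine ⟨?_, hii, ?_⟩
  · calc g zt (vhat t) ≤ Gbar t zt (vhat t) := hg zt (vhat t)
      _ = Gbar t (zhat t) (vhat t) := by rw [hinit]
      _ ≤ 0 := hplanFeas t le_rfl (by omega)
  · set u : ℕ → Fin p → ℝ := fun τ => if τ < t + Tc then vhat τ else vstar τ with hu
    set w : ℕ → Fin n → ℝ :=
      fun m => Nat.rec (f zt (vhat t)) (fun m zm => Fbar (t + 1 + m) zm (u (t + 1 + m))) m
      with hw
    refine ⟨fun τ => w (τ - (t + 1)), by show w (t + 1 - (t + 1)) = _; rw [Nat.sub_self]; rfl, ?_, ?_⟩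
    all_goals
      have hrec : ∀ τ, t + 1 ≤ τ → w (τ + 1 - (t + 1)) = Fbar τ (w (τ - (t + 1))) (u τ) := by
        intro τ hτ
        have h1 : τ + 1 - (t + 1) = (τ - (t + 1)) + 1 := by omega
        have h2 : t + 1 + (τ - (t + 1)) = τ := by omega
        rw [h1]; show Fbar (t + 1 + (τ - (t+1))) _ _ = _; rw [h2]
      have hdom : ∀ τ, t + 1 ≤ τ → τ ≤ t + Tc → w (τ - (t + 1)) ≤ zhat τ := by
        intro τ hτ
        induction τ, hτ using Nat.le_induction with
        | base =>
          intro _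
          show w (t + 1 - (t + 1)) ≤ _; rw [Nat.sub_self]; exact hii
        | succ τ hτ ih =>
          intro hle
          have hlt : τ < t + Tc := by omega
          rw [hrec τ hτ, hpred τ (by omega) hlt]
          have : u τ = vhat τ := if_pos hlt
          rw [this]
          exact hFmono τ (vhat τ) (ih (by omega))
    · intro τ hτ hτ'
      refine ⟨hrec τ hτ, ?_⟩
      by_cases hc : τ < t + Tc
      · rw [if_pos hc]
        calc Gbar τ (w (τ - (t+1))) (vhat τ)
            ≤ Gbar τ (zhat τ) (vhat τ) := hGmono τ (vhat τ) (hdom τ hτ (by omega))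
          _ ≤ 0 := hplanFeas τ (by omega) hc
      · have hτeq : τ = t + Tc := by omega
        rw [if_neg hc]
        calc Gbar τ (w (τ - (t+1))) (vstar τ)
            ≤ Gbar τ (zstar τ) (vstar τ) := by
              apply hGmono τ (vstar τ)
              exact le_trans (hdom τ hτ (by omega)) (hτeq ▸ hterm)
          _ ≤ 0 := hzstarFeas τ
    · have h1 : t + 1 + Tc = (t + Tc) + 1 := by omega
      show w (t + 1 + Tc - (t + 1)) ≤ _
      rw [show t + 1 + Tc = t + Tc + 1 from by omega]
      rw [hrec (t + Tc) (by omega)]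
      have hu2 : u (t + Tc) = vstar (t + Tc) := if_neg (by omega)
      rw [hu2, hzstarRec (t + Tc)]
      apply hFmono
      exact le_trans (hdom (t + Tc) (by omega) le_rfl) hterm
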